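/- Let N ≥ 2, let S ⊆ PG(N,q), and suppose there are nonnegative integers x_i (for i ≥ 1) such that for every point P ∈ S and every i ≥ 1, the number of lines through P meeting S in exactly i points equals x_i (independent of P). Then for every point P ∈ S, the number of unordered pairs of distinct points of PG(N,q) \ S collinear with P equals Σ_{i≥1} x_i · C(q+1−i, 2). In particular, PG(N,q) \ S is a (1, Σ_i x_i·C(q+1−i,2))-OS set of size (q^{N+1}−1)/(q−1) − #S (provided it spans PG(N,q) and is not the whole space). -/

import Mathlib

open Module

/-- Points of `PG(N,q)`: 1-dimensional subspaces of `F^(N+1)`. -/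
abbrev PGPoint (F : Type) [Field F] (N : ℕ) :=
  {W : Submodule F (Fin (N + 1) → F) // Module.finrank F W = 1}

/-- Lines of `PG(N,q)`: 2-dimensional subspaces of `F^(N+1)`. -/
abbrev PGLine (F : Type) [Field F] (N : ℕ) :=
  {W : Submodule F (Fin (N + 1) → F) // Module.finrank F W = 2}

/-- The number of points of `S` lying on the line `L`. -/
noncomputable def lineCount {F : Type} [Field F] {N : ℕ}
    (S : Set (PGPoint F N)) (L : PGLine F N) : ℕ :=
  {P : PGPoint F N | P ∈ S ∧ P.1 ≤ L.1}.ncard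

/-- The number of unordered pairs of distinct points of `S` collinear with `Q`
(the number of secants of `S` through `Q`, counted with multiplicity). -/
noncomputable def pairCount {F : Type} [Field F] {N : ℕ}
    (S : Set (PGPoint F N)) (Q : PGPoint F N) : ℕ :=
  {e : Set (PGPoint F N) |
    ∃ A ∈ S, ∃ B ∈ S, A ≠ B ∧ e = {A, B} ∧ Q.1 ≤ A.1 ⊔ B.1}.ncard

/-- `S` spans (generates) `PG(N,q)`. -/
def Spans {F : Type} [Field F] {N : ℕ} (S : Set (PGPoint F N)) : Prop :=
  (⨆ P ∈ S, P.1) = ⊤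

/-- `S` is a `(1,μ)`-saturating set. -/
def IsSaturating {F : Type} [Field F] {N : ℕ} (S : Set (PGPoint F N)) (μ : ℕ) : Prop :=
  Spans S ∧ S ≠ Set.univ ∧ ∀ Q : PGPoint F N, Q ∉ S → μ ≤ pairCount S Q

/-- `S` is an optimal `(1,μ)`-saturating set (`(1,μ)`-OS set). -/
def IsOS {F : Type} [Field F] {N : ℕ} (S : Set (PGPoint F N)) (μ : ℕ) : Prop :=
  Spans S ∧ S ≠ Set.univ ∧ ∀ Q : PGPoint F N, Q ∉ S → pairCount S Q = μ

/-- `S` is a minimal `(1,μ)`-saturating set: no proper subset is `(1,μ)`-saturating. -/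
def IsMinimalSaturating {F : Type} [Field F] {N : ℕ} (S : Set (PGPoint F N)) (μ : ℕ) : Prop :=
  IsSaturating S μ ∧ ∀ T : Set (PGPoint F N), T ⊂ S → ¬ IsSaturating T μ

section Aux
variable {F : Type} [Field F] [Fintype F] {N : ℕ}

instance : Finite (Submodule F (Fin (N + 1) → F)) :=
  Finite.of_injective (fun W : Submodule F (Fin (N + 1) → F) => (W : Set (Fin (N + 1) → F))) SetLike.coe_injective

lemma ncard_submodule_sdiff_zero (U : Submodule F (Fin (N + 1) → F)) :
    {v : Fin (N + 1) → F | v ∈ U ∧ v ≠ 0}.ncard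
      = Fintype.card F ^ (Module.finrank F U) - 1 := by
  classical
  have h1 : {v : Fin (N + 1) → F | v ∈ U ∧ v ≠ 0} = (U : Set _) \ {0} := by
    ext v; simp [and_comm]
  have hs : ({(0 : Fin (N+1) → F)} : Set _) ⊆ (U : Set _) := by
    simp [Set.singleton_subset_iff]
  rw [h1, Set.ncard_diff hs, Set.ncard_singleton]
  congr 1
  have : Fintype ↥U := Fintype.ofFinite _
  rw [← Nat.card_coe_set_eq]
  rw [show Nat.card ↥(U : Set (Fin (N+1) → F)) = Nat.card ↥U from rfl]
  rw [Nat.card_eq_fintype_card]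
  exact card_eq_pow_finrank

noncomputable def somePt (F : Type) [Field F] (N : ℕ) : PGPoint F N :=
  ⟨Submodule.span F {(fun _ => 1 : Fin (N + 1) → F)}, finrank_span_singleton (by
    intro h
    have := congrFun h 0
    simp at this)⟩

open Classical in
noncomputable def ptOf (v : Fin (N + 1) → F) : PGPoint F N :=
  if h : v = 0 then somePt F N else ⟨Submodule.span F {v}, finrank_span_singleton h⟩

lemma ptOf_ne {v : Fin (N + 1) → F} (h : v ≠ 0) :
    ptOf v = ⟨Submodule.span F {v}, finrank_span_singleton h⟩ := by
  unfold ptOf; exact dif_neg h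

lemma pts_card_mul (W : Submodule F (Fin (N + 1) → F)) :
    {P : PGPoint F N | P.1 ≤ W}.ncard * (Fintype.card F - 1)
      = Fintype.card F ^ (Module.finrank F W) - 1 := by
  classical
  have hfin : ({P : PGPoint F N | P.1 ≤ W}).Finite := Set.toFinite _
  have hsfin : ({v : Fin (N + 1) → F | v ∈ W ∧ v ≠ 0}).Finite := Set.toFinite _
  set t := hfin.toFinset with ht
  set s := hsfin.toFinset with hs
  have hmap : ∀ v ∈ s, ptOf v ∈ t := by
    intro v hv
    simp only [hs, ht, Set.Finite.mem_toFinset, Set.mem_setOf_eq] at hv ⊢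
    rw [ptOf_ne hv.2]
    exact Submodule.span_le.2 (Set.singleton_subset_iff.2 hv.1)
  have hcard := Finset.card_eq_sum_card_fiberwise hmap
  have hfib : ∀ P ∈ t, (s.filter (fun v => ptOf v = P)).card = Fintype.card F - 1 := by
    intro P hP
    simp only [ht, Set.Finite.mem_toFinset, Set.mem_setOf_eq] at hP
    have heq : (s.filter (fun v => ptOf v = P))
        = (Set.toFinite {v : Fin (N + 1) → F | v ∈ P.1 ∧ v ≠ 0}).toFinset := by
      ext v
      simp only [hs, Finset.mem_filter, Set.Finite.mem_toFinset, Set.mem_setOf_eq]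
      constructor
      · rintro ⟨⟨hvW, hv0⟩, hφ⟩
        rw [ptOf_ne hv0] at hφ
        have hsp : Submodule.span F {v} = P.1 := congrArg Subtype.val hφ
        exact ⟨hsp ▸ Submodule.mem_span_singleton_self v, hv0⟩
      · rintro ⟨hvP, hv0⟩
        refine ⟨⟨hP hvP, hv0⟩, ?_⟩
        rw [ptOf_ne hv0]
        apply Subtype.ext
        apply Submodule.eq_of_le_of_finrank_eq
        · exact Submodule.span_le.2 (Set.singleton_subset_iff.2 hvP)
        · rw [finrank_span_singleton hv0, P.2]
    rw [heq, ← Set.ncard_eq_toFinset_card _ (Set.toFinite _),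
      ncard_submodule_sdiff_zero P.1, P.2, pow_one]
  have hs_card : s.card = Fintype.card F ^ (Module.finrank F W) - 1 := by
    rw [hs, ← Set.ncard_eq_toFinset_card _ hsfin]
    exact ncard_submodule_sdiff_zero W
  rw [Finset.sum_congr rfl hfib, Finset.sum_const, smul_eq_mul] at hcard
  rw [Set.ncard_eq_toFinset_card _ hfin, ← ht]
  omega

lemma pts_on_line (L : PGLine F N) :
    {P : PGPoint F N | P.1 ≤ L.1}.ncard = Fintype.card F + 1 := by
  have h := pts_card_mul (F := F) (N := N) L.1
  rw [L.2] at h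
  have hq : 2 ≤ Fintype.card F := Fintype.one_lt_card
  obtain ⟨m, hm⟩ : ∃ m, Fintype.card F = m + 2 := ⟨Fintype.card F - 2, by omega⟩
  rw [hm] at h ⊢
  have e : (m + 2 + 1) * (m + 2 - 1) + 1 = (m + 2) ^ 2 := by
    show (m + 3) * (m + 1) + 1 = (m + 2) ^ 2
    ring
  apply Nat.eq_of_mul_eq_mul_right (show 0 < m + 2 - 1 by omega)
  omega

lemma total_pts_card :
    Nat.card (PGPoint F N) * (Fintype.card F - 1) = Fintype.card F ^ (N + 1) - 1 := by
  have h := pts_card_mul (F := F) (N := N) ⊤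
  have h2 : Module.finrank F (⊤ : Submodule F (Fin (N + 1) → F)) = N + 1 := by
    rw [finrank_top, Module.finrank_fin_fun]
  rw [h2] at h
  have h3 : {P : PGPoint F N | P.1 ≤ ⊤} = Set.univ := by
    ext P; simp [le_top]
  rw [h3, Set.ncard_univ] at h
  exact h

lemma rank_sup {A B : PGPoint F N} (h : A ≠ B) :
    Module.finrank F ↥(A.1 ⊔ B.1) = 2 := by
  have hsum := Submodule.finrank_sup_add_finrank_inf_eq A.1 B.1
  rw [A.2, B.2] at hsum
  have h1 : Module.finrank F ↥A.1 ≤ Module.finrank F ↥(A.1 ⊔ B.1) :=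
    Submodule.finrank_mono le_sup_left
  rw [A.2] at h1
  by_contra hne
  have h2 : Module.finrank F ↥(A.1 ⊔ B.1) = 1 := by omega
  have hA : A.1 = A.1 ⊔ B.1 :=
    Submodule.eq_of_le_of_finrank_eq le_sup_left (by rw [A.2, h2])
  have hB : B.1 = A.1 ⊔ B.1 :=
    Submodule.eq_of_le_of_finrank_eq le_sup_right (by rw [B.2, h2])
  exact h (Subtype.ext (hA.trans hB.symm))

lemma line_eq {L : PGLine F N} {A B : PGPoint F N} (hA : A.1 ≤ L.1) (hB : B.1 ≤ L.1)
    (hAB : A ≠ B) : A.1 ⊔ B.1 = L.1 :=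
  Submodule.eq_of_le_of_finrank_eq (sup_le hA hB) (by rw [rank_sup hAB, L.2])

lemma pair_count_eq (S : Set (PGPoint F N)) (P : PGPoint F N) (hP : P ∈ S) :
    pairCount Sᶜ P = ∑ i ∈ Finset.Icc 1 (Fintype.card F + 1),
      {L : PGLine F N | P.1 ≤ L.1 ∧ lineCount S L = i}.ncard
        * Nat.choose (Fintype.card F + 1 - i) 2 := by
  classical
  set q := Fintype.card F with hqdef
  set E : Set (Set (PGPoint F N)) := {e : Set (PGPoint F N) |
    ∃ A ∈ Sᶜ, ∃ B ∈ Sᶜ, A ≠ B ∧ e = {A, B} ∧ P.1 ≤ A.1 ⊔ B.1} with hE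
  have hEfin : E.Finite := Set.toFinite _
  set T : Finset (PGLine F N) := (Set.toFinite {L : PGLine F N | P.1 ≤ L.1}).toFinset with hT
  set f : Set (PGPoint F N) → Submodule F (Fin (N + 1) → F) :=
    fun e => ⨆ A ∈ e, A.1 with hf
  have hfpair : ∀ A B : PGPoint F N, f ({A, B} : Set _) = A.1 ⊔ B.1 := fun A B => iSup_pair
  have hmap : ∀ e ∈ hEfin.toFinset, f e ∈ T.image (fun L => L.1) := by
    intro e he
    rw [Set.Finite.mem_toFinset] at he
    obtain ⟨A, hA, B, hB, hAB, rfl, hle⟩ := he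
    rw [hfpair]
    refine Finset.mem_image.2 ⟨⟨A.1 ⊔ B.1, rank_sup hAB⟩, ?_, rfl⟩
    rw [hT, Set.Finite.mem_toFinset]
    exact hle
  have hcard := Finset.card_eq_sum_card_fiberwise hmap
  rw [Finset.sum_image (by intro a _ b _ h; exact Subtype.ext h)] at hcard
  have hfib : ∀ L ∈ T, ((hEfin.toFinset).filter (fun e => f e = L.1)).card
      = Nat.choose (q + 1 - lineCount S L) 2 := by
    intro L hL
    rw [hT, Set.Finite.mem_toFinset] at hL
    set TL : Set (PGPoint F N) := Sᶜ ∩ {A : PGPoint F N | A.1 ≤ L.1} with hTL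
    have hTLn : TL.ncard = q + 1 - lineCount S L := by
      have h1 : TL = {A : PGPoint F N | A.1 ≤ L.1}
          \ {A : PGPoint F N | A ∈ S ∧ A.1 ≤ L.1} := by
        ext A
        simp only [hTL, Set.mem_inter_iff, Set.mem_compl_iff, Set.mem_setOf_eq, Set.mem_diff]
        tauto
      rw [h1, Set.ncard_diff (fun A hA => hA.2) (Set.toFinite _), pts_on_line]
      rfl
    have hcard2 : ((Set.toFinite TL).toFinset.powersetCard 2).card
        = Nat.choose (q + 1 - lineCount S L) 2 := by
      rw [Finset.card_powersetCard, ← Set.ncard_eq_toFinset_card _ (Set.toFinite TL), hTLn]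
    rw [← hcard2]
    apply Finset.card_bij (fun e _ => (Set.toFinite e).toFinset)
    · intro e he
      simp only [Finset.mem_filter, Set.Finite.mem_toFinset, hE, Set.mem_setOf_eq] at he
      obtain ⟨⟨A, hA, B, hB, hAB, rfl, hle⟩, hfe⟩ := he
      rw [hfpair] at hfe
      rw [Finset.mem_powersetCard]
      constructor
      · intro z hz
        rw [Set.Finite.mem_toFinset] at hz
        rw [Set.Finite.mem_toFinset]
        rw [Set.mem_insert_iff, Set.mem_singleton_iff] at hz
        rcases hz with rfl | rfl
        · exact ⟨hA, show z.1 ≤ L.1 by rw [← hfe]; exact le_sup_left⟩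
        · exact ⟨hB, show z.1 ≤ L.1 by rw [← hfe]; exact le_sup_right⟩
      · have he2 : (Set.toFinite ({A, B} : Set (PGPoint F N))).toFinset
            = ({A, B} : Finset (PGPoint F N)) := by
          ext z
          simp only [Set.Finite.mem_toFinset, Set.mem_insert_iff, Set.mem_singleton_iff,
            Finset.mem_insert, Finset.mem_singleton]
        rw [he2, Finset.card_insert_of_notMem (by simp [hAB]), Finset.card_singleton]
    · intro e1 he1 e2 he2 h
      have h1 := congrArg (fun (s : Finset (PGPoint F N)) => (s : Set (PGPoint F N))) h
      simpa [Set.Finite.coe_toFinset] using h1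
    · intro b hb
      rw [Finset.mem_powersetCard] at hb
      obtain ⟨hsub, hbcard⟩ := hb
      obtain ⟨A, B, hAB, rfl⟩ := Finset.card_eq_two.1 hbcard
      have hA : A ∈ TL := by
        have := hsub (Finset.mem_insert_self A {B})
        rwa [Set.Finite.mem_toFinset] at this
      have hB : B ∈ TL := by
        have := hsub (Finset.mem_insert_of_mem (Finset.mem_singleton_self B))
        rwa [Set.Finite.mem_toFinset] at this
      obtain ⟨hA1, hA2⟩ := hA
      obtain ⟨hB1, hB2⟩ := hB
      refine ⟨({A, B} : Set (PGPoint F N)), ?_, ?_⟩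
      · simp only [Finset.mem_filter, Set.Finite.mem_toFinset, hE, Set.mem_setOf_eq]
        constructor
        · exact ⟨A, hA1, B, hB1, hAB, rfl, by rw [line_eq hA2 hB2 hAB]; exact hL⟩
        · rw [hfpair]; exact line_eq hA2 hB2 hAB
      · ext z
        simp only [Set.Finite.mem_toFinset, Finset.coe_insert, Finset.coe_singleton,
          Set.mem_insert_iff, Set.mem_singleton_iff, Finset.mem_insert, Finset.mem_singleton]
  rw [Finset.sum_congr rfl hfib] at hcard
  have hmem : ∀ L ∈ T, lineCount S L ∈ Finset.Icc 1 (q + 1) := by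
    intro L hL
    rw [hT, Set.Finite.mem_toFinset] at hL
    rw [Finset.mem_Icc]
    constructor
    · have : 0 < lineCount S L :=
        (Set.ncard_pos (Set.toFinite _)).2 ⟨P, hP, hL⟩
      omega
    · have h1 : lineCount S L ≤ {A : PGPoint F N | A.1 ≤ L.1}.ncard :=
        Set.ncard_le_ncard (fun A hA => hA.2) (Set.toFinite _)
      rw [pts_on_line] at h1
      exact h1
  have hgroup := Finset.sum_fiberwise_of_maps_to hmem
    (fun L => Nat.choose (q + 1 - lineCount S L) 2)
  have hinner : ∀ i ∈ Finset.Icc 1 (q + 1),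
      (∑ L ∈ T.filter (fun L => lineCount S L = i), Nat.choose (q + 1 - lineCount S L) 2)
      = {L : PGLine F N | P.1 ≤ L.1 ∧ lineCount S L = i}.ncard
          * Nat.choose (q + 1 - i) 2 := by
    intro i _
    have hfe : T.filter (fun L => lineCount S L = i)
        = (Set.toFinite {L : PGLine F N | P.1 ≤ L.1 ∧ lineCount S L = i}).toFinset := by
      ext L
      simp [hT, Set.Finite.mem_toFinset]
    rw [Finset.sum_congr rfl (fun L hL => by
      rw [(Finset.mem_filter.1 hL).2]), Finset.sum_const, smul_eq_mul, hfe,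
      ← Set.ncard_eq_toFinset_card _ (Set.toFinite _)]
  have : pairCount Sᶜ P = hEfin.toFinset.card := by
    rw [pairCount, Set.ncard_eq_toFinset_card _ hEfin]
  rw [this, hcard, ← hgroup, Finset.sum_congr rfl hinner]
end Aux

/-- Let `N ≥ 2` and `S ⊆ PG(N,q)` be such that for every `P ∈ S`
and every `i ≥ 1` the number of `i`-secants of `S` through `P` is a constant
`x i`. Then for every `P ∈ S` the number of unordered pairs of distinct points
of the complement of `S` collinear with `P` is `μ = Σ_{i≥1} x i · C(q+1−i, 2)`;
the complement has size `(q^(N+1)−1)/(q−1) − #S`, and (provided it spans and is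
not the whole space) it is a `(1,μ)`-OS set. -/
theorem stmt_6 (F : Type) [Field F] [Fintype F] (q N : ℕ)
    (hq : Fintype.card F = q) (hN : 2 ≤ N)
    (S : Set (PGPoint F N)) (x : ℕ → ℕ)
    (hx : ∀ P ∈ S, ∀ i : ℕ, 1 ≤ i →
      {L : PGLine F N | P.1 ≤ L.1 ∧ lineCount S L = i}.ncard = x i) :
    (∀ P ∈ S, pairCount Sᶜ P =
      ∑ i ∈ Finset.Icc 1 (q + 1), x i * Nat.choose (q + 1 - i) 2) ∧
    Sᶜ.ncard = (q ^ (N + 1) - 1) / (q - 1) - S.ncard ∧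
    (Spans Sᶜ ∧ Sᶜ ≠ Set.univ →
      IsOS Sᶜ (∑ i ∈ Finset.Icc 1 (q + 1), x i * Nat.choose (q + 1 - i) 2)) := by
  classical
  subst hq
  have hq2 : 2 ≤ Fintype.card F := Fintype.one_lt_card
  have key : ∀ P ∈ S, pairCount Sᶜ P =
      ∑ i ∈ Finset.Icc 1 (Fintype.card F + 1),
        x i * Nat.choose (Fintype.card F + 1 - i) 2 := by
    intro P hP
    rw [pair_count_eq S P hP]
    exact Finset.sum_congr rfl fun i hi => by
      rw [hx P hP i (Finset.mem_Icc.1 hi).1]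
  refine ⟨key, ?_, ?_⟩
  · have h1 := Set.ncard_add_ncard_compl S (Set.toFinite _) (Set.toFinite _)
    have h2 := total_pts_card (F := F) (N := N)
    have h3 : (Fintype.card F ^ (N + 1) - 1) / (Fintype.card F - 1)
        = Nat.card (PGPoint F N) :=
      Nat.div_eq_of_eq_mul_left (by omega) h2.symm
    rw [h3]
    omega
  · rintro ⟨hsp, hne⟩
    exact ⟨hsp, hne, fun Q hQ => key Q (Set.notMem_compl_iff.1 hQ)⟩
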